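/- Let R ∈ ℝ^{d×d} be symmetric positive definite, let a ∈ ℝ^d with ‖a‖ = 1, and let W ∈ ℝ^{d×(d−1)} be any matrix whose columns form an orthonormal basis of the hyperplane H = {x ∈ ℝ^d : aᵀx = 0}. Then det(WᵀRW) = det(R)·(aᵀR⁻¹a). -/

import Mathlib

open Matrix Set MeasureTheory Pointwise ENNReal

noncomputable section

/-- Euclidean dot product on `Fin d → ℝ`. -/
def dotp {d : ℕ} (u v : Fin d → ℝ) : ℝ := ∑ i, u i * v i

/-- Euclidean norm on `Fin d → ℝ`. -/
def norm2 {d : ℕ} (v : Fin d → ℝ) : ℝ := Real.sqrt (∑ i, v i ^ 2)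

/-- Normalization `v / ‖v‖`, with the convention that `0` is mapped to `0`. -/
def nml {d : ℕ} (v : Fin d → ℝ) : Fin d → ℝ := (norm2 v)⁻¹ • v

/-- The `j`-th column of a matrix. -/
def mcol {d : ℕ} {ι : Type} (A : Matrix (Fin d) ι ℝ) (j : ι) : Fin d → ℝ := fun i => A i j

/-- Goffin's condition measure `ρ_A = max_{y ∈ im(A) \ {0}} min_j â_jᵀ ŷ`. -/
def goffin {d : ℕ} {ι : Type} [Fintype ι] (A : Matrix (Fin d) ι ℝ) : ℝ :=
  sSup { r : ℝ | ∃ y : Fin d → ℝ, (∃ x : ι → ℝ, A.mulVec x = y) ∧ y ≠ 0 ∧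
    r = ⨅ j : ι, dotp (nml (mcol A j)) (nml y) }

/-- The cone `Σ_A = {y : Aᵀ y ≥ 0}`. -/
def SigmaCone {d : ℕ} {ι : Type} (A : Matrix (Fin d) ι ℝ) : Set (Fin d → ℝ) :=
  { y | ∀ j, 0 ≤ dotp (mcol A j) y }

/-- `F_A = Σ_A ∩ B^d`. -/
def FA {d : ℕ} {ι : Type} (A : Matrix (Fin d) ι ℝ) : Set (Fin d → ℝ) :=
  SigmaCone A ∩ { z | norm2 z ≤ 1 }

/-- `‖v‖_M = √(vᵀ M v)`. -/
def qnorm {d : ℕ} (M : Matrix (Fin d) (Fin d) ℝ) (v : Fin d → ℝ) : ℝ :=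
  Real.sqrt (dotp v (M.mulVec v))

/-- The ellipsoid `E(M) = {z : ‖z‖_M ≤ 1}`. -/
def ell {d : ℕ} (M : Matrix (Fin d) (Fin d) ℝ) : Set (Fin d → ℝ) :=
  { z | qnorm M z ≤ 1 }

/-- The width of a set `X` along `a`: `sup {aᵀz : z ∈ X}`. -/
def widthOf {d : ℕ} (X : Set (Fin d → ℝ)) (a : Fin d → ℝ) : ℝ :=
  sSup { r : ℝ | ∃ z ∈ X, r = dotp a z }

/-- `P_A = conv(â_1,…,â_n) ∩ (−conv(â_1,…,â_n))`. -/
def PA {d : ℕ} {ι : Type} (A : Matrix (Fin d) ι ℝ) : Set (Fin d → ℝ) :=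
  convexHull ℝ (Set.range fun j => nml (mcol A j)) ∩
    (-(convexHull ℝ (Set.range fun j => nml (mcol A j))))

/-- `Δ_A`: maximum of `∏_{j ∈ B} ‖a_j‖` over sets `B` of linearly independent columns. -/
def DeltaA {d n : ℕ} (A : Matrix (Fin d) (Fin n) ℝ) : ℝ :=
  sSup { p : ℝ | ∃ B : Finset (Fin n),
    LinearIndependent ℝ (fun j : {x // x ∈ B} => mcol A j.1) ∧ p = ∏ j ∈ B, norm2 (mcol A j) }

/-- `T*_A`: indices `i` such that some `y` with `Aᵀy ≥ 0` has `a_iᵀ y > 0`. -/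
def TstarA {d : ℕ} {ι : Type} (A : Matrix (Fin d) ι ℝ) : Set ι :=
  { i | ∃ y : Fin d → ℝ, (∀ j, 0 ≤ dotp (mcol A j) y) ∧ 0 < dotp (mcol A i) y }

/-- `S*_A`: indices `i` such that some `x ≥ 0` with `Ax = 0` has `x_i > 0`. -/
def SstarA {d : ℕ} {ι : Type} [Fintype ι] (A : Matrix (Fin d) ι ℝ) : Set ι :=
  { i | ∃ x : ι → ℝ, (∀ j, 0 ≤ x j) ∧ A.mulVec x = 0 ∧ 0 < x i }

/-- `ω_A = min_{i ∈ T*_A} width_{F_A}(â_i)`. -/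
def omegaA {d : ℕ} {ι : Type} (A : Matrix (Fin d) ι ℝ) : ℝ :=
  sInf ((fun i => widthOf (FA A) (nml (mcol A i))) '' TstarA A)

/-- Lemma 4.1: for a symmetric positive definite `R`, a unit vector `a`, and a matrix `W`
whose columns form an orthonormal basis of the hyperplane `H = {x : aᵀx = 0}`,
one has `det(Wᵀ R W) = det(R) · (aᵀ R⁻¹ a)`. -/
theorem det_projected_eq
    {d : ℕ} (R : Matrix (Fin d) (Fin d) ℝ) (hR : R.PosDef)
    (a : Fin d → ℝ) (ha : norm2 a = 1)
    (W : Matrix (Fin d) (Fin (d - 1)) ℝ)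
    (hWo : Wᵀ * W = 1)
    (hWH : ∀ x : Fin d → ℝ, (∃ c : Fin (d - 1) → ℝ, W.mulVec c = x) ↔ dotp a x = 0) :
    (Wᵀ * R * W).det = R.det * dotp a (R⁻¹.mulVec a) := by
  classical
  -- basic facts
  have haa : ∑ i, a i ^ 2 = 1 := by
    have h1 : (0:ℝ) ≤ ∑ i, a i ^ 2 := Finset.sum_nonneg fun i _ => sq_nonneg _
    have := Real.sq_sqrt h1
    rw [show Real.sqrt (∑ i, a i ^ 2) = 1 from ha] at this
    simpa using this.symm
  have hd : 0 < d := by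
    rcases Nat.eq_zero_or_pos d with h | h
    · subst h; simp [norm2] at ha
    · exact h
  have hdetR : R.det ≠ 0 := ne_of_gt hR.det_pos
  have hRinv : R * R⁻¹ = 1 := mul_nonsing_inv R (isUnit_iff_ne_zero.mpr hdetR)
  have hRinv' : R⁻¹ * R = 1 := nonsing_inv_mul R (isUnit_iff_ne_zero.mpr hdetR)
  -- the augmented matrix
  set A₂ : Matrix (Fin d) Unit ℝ := Matrix.of (fun i _ => a i) with hA₂
  set M : Matrix (Fin d) (Fin (d-1) ⊕ Unit) ℝ := fromCols W A₂ with hM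
  -- columns of W are orthogonal to a
  have hWa : Wᵀ * A₂ = 0 := by
    ext j u
    have hcol : dotp a (W.mulVec (Pi.single j 1)) = 0 :=
      (hWH _).mp ⟨Pi.single j 1, rfl⟩
    simp only [dotp, mulVec_single, mul_one] at hcol
    simp only [Matrix.mul_apply, transpose_apply, hA₂, Matrix.of_apply, Matrix.zero_apply]
    rw [← hcol]
    exact Finset.sum_congr rfl fun i _ => by simp [mul_comm]
  have hA₂W : A₂ᵀ * W = 0 := by
    have := congrArg Matrix.transpose hWa
    simpa [Matrix.transpose_mul] using this
  have hA₂A₂ : A₂ᵀ * A₂ = 1 := by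
    ext u v
    simp only [Matrix.mul_apply, transpose_apply, hA₂, Matrix.of_apply]
    have : ∑ i, a i * a i = 1 := by simpa [sq] using haa
    simp [this, Matrix.one_apply]
  have hMtM : Mᵀ * M = 1 := by
    rw [hM, transpose_fromCols, fromRows_mul_fromCols, hWo, hWa, hA₂W, hA₂A₂]
    ext (i|i) (j|j) <;> simp [Matrix.fromBlocks, Matrix.one_apply]
  -- an equivalence to make M square
  have hcard : Fintype.card (Fin (d-1) ⊕ Unit) = Fintype.card (Fin d) := by
    simp [Nat.sub_add_cancel hd]
  obtain ⟨e⟩ : Nonempty (Fin d ≃ (Fin (d-1) ⊕ Unit)) :=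
    ⟨(Fintype.equivOfCardEq hcard).symm⟩
  set M' : Matrix (Fin d) (Fin d) ℝ := M.submatrix id e with hM'
  have hM'tM' : M'ᵀ * M' = 1 := by
    have h : M'ᵀ = Mᵀ.submatrix ⇑e id := rfl
    have h2 : Mᵀ.submatrix ⇑e id * M.submatrix id ⇑e = (Mᵀ * M).submatrix ⇑e ⇑e := by
      simpa using submatrix_mul_equiv Mᵀ M ⇑e (Equiv.refl (Fin d)) ⇑e
    rw [hM', h, h2, hMtM, Matrix.submatrix_one_equiv]
  have hM'M't : M' * M'ᵀ = 1 := mul_eq_one_comm.mp hM'tM'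
  have hMMt : M * Mᵀ = 1 := by
    have h : M * Mᵀ = M.submatrix id ⇑e * Mᵀ.submatrix ⇑e id := by
      rw [submatrix_mul_equiv M Mᵀ id e id]
      rfl
    rw [h]; exact hM'M't
  -- the conjugated matrix N
  set N : Matrix (Fin (d-1) ⊕ Unit) (Fin (d-1) ⊕ Unit) ℝ := Mᵀ * R * M with hN
  have hNblock : N = fromBlocks (Wᵀ*R*W) (Wᵀ*R*A₂) (A₂ᵀ*R*W) (A₂ᵀ*R*A₂) := by
    rw [hN, hM, transpose_fromCols, Matrix.mul_assoc, mul_fromCols,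
      fromRows_mul_fromCols]
    simp [Matrix.mul_assoc]
  have hdetN : N.det = R.det := by
    have h1 : M'ᵀ * R * M' = N.submatrix ⇑e ⇑e := by
      have ht : M'ᵀ = Mᵀ.submatrix ⇑e id := rfl
      have h2 : Mᵀ.submatrix ⇑e id * R = (Mᵀ * R).submatrix ⇑e id := by
        have := submatrix_mul_equiv Mᵀ R ⇑e (Equiv.refl (Fin d)) id
        simpa using this
      have h4 : (Mᵀ * R).submatrix ⇑e id * M.submatrix id ⇑e = (Mᵀ * R * M).submatrix ⇑e ⇑e := by
        simpa using submatrix_mul_equiv (Mᵀ * R) M ⇑e (Equiv.refl (Fin d)) ⇑e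
      rw [hM', ht, h2, h4, hN]
    have h3 : N.det = (M'ᵀ * R * M').det := by
      rw [h1, Matrix.det_submatrix_equiv_self]
    have hdM : M'.det * M'.det = 1 := by
      have := congrArg Matrix.det hM'tM'
      rwa [Matrix.det_mul, Matrix.det_transpose, Matrix.det_one] at this
    rw [h3, Matrix.det_mul, Matrix.det_mul, Matrix.det_transpose]
    linear_combination R.det * hdM
  -- inverse of N
  have hNinv : N * (Mᵀ * R⁻¹ * M) = 1 := by
    rw [hN]
    calc Mᵀ * R * M * (Mᵀ * R⁻¹ * M)
        = Mᵀ * R * (M * Mᵀ) * R⁻¹ * M := by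
          simp only [Matrix.mul_assoc]
      _ = Mᵀ * (R * R⁻¹) * M := by rw [hMMt]; simp only [Matrix.mul_assoc, Matrix.one_mul]
      _ = 1 := by rw [hRinv, Matrix.mul_one, hMtM]
  have hNinv' : N⁻¹ = Mᵀ * R⁻¹ * M := Matrix.inv_eq_right_inv hNinv
  have hdetN' : N.det ≠ 0 := by rw [hdetN]; exact hdetR
  -- adjugate entry
  have hadj : N.adjugate (Sum.inr ()) (Sum.inr ()) = (Wᵀ * R * W).det := by
    rw [Matrix.adjugate_apply]
    have hupdate : N.updateRow (Sum.inr ()) (Pi.single (Sum.inr ()) 1)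
        = fromBlocks (Wᵀ*R*W) (Wᵀ*R*A₂) 0 1 := by
      rw [hNblock]
      ext (i|i) (j|j) <;>
        simp [Matrix.updateRow_apply, Matrix.fromBlocks, Pi.single_apply, Matrix.one_apply]
    rw [hupdate, Matrix.det_fromBlocks_zero₂₁, Matrix.det_one, mul_one]
  have hadj2 : N.adjugate (Sum.inr ()) (Sum.inr ()) = N.det * N⁻¹ (Sum.inr ()) (Sum.inr ()) := by
    rw [Matrix.inv_def, Ring.inverse_eq_inv]
    simp only [Matrix.smul_apply, smul_eq_mul]
    field_simp
  have hentry : (Mᵀ * R⁻¹ * M) (Sum.inr ()) (Sum.inr ()) = dotp a (R⁻¹.mulVec a) := by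
    rw [Matrix.mul_assoc]
    simp only [Matrix.mul_apply, transpose_apply, dotp, Matrix.mulVec, dotProduct]
    refine Finset.sum_congr rfl fun i _ => ?_
    simp [hM, hA₂, Matrix.fromCols, Matrix.mul_apply]
  rw [← hadj, hadj2, hdetN, hNinv', hentry]
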